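/- Let D be an n×n matrix over ℤ/2 with D·D = 0, let V be an upper-triangular n×n matrix over ℤ/2 with all diagonal entries equal to 1, and suppose R = D·V is reduced. If j is an index with nonzero column R_j and i = low(R, j), then the i-th column of R is zero. (The lowest-one positions of a reduced boundary matrix define a partial matching: a cell that kills a class is never itself a creator of a lowest one.) -/
import Mathlib


/-- The `j`-th column of the matrix `R`. -/
def column {n : ℕ} (R : Matrix (Fin n) (Fin n) (ZMod 2)) (j : Fin n) : Fin n → ZMod 2 :=
  fun i => R i j

/-- `low v` is the largest index at which the vector `v` over `ℤ/2` is nonzero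
(`⊥` if `v = 0`). -/
def low {n : ℕ} (v : Fin n → ZMod 2) : WithBot (Fin n) :=
  (Finset.univ.filter (fun i => v i ≠ 0)).max

/-- `lowM R j` is the lowest-one position of the `j`-th column of `R`. -/
def lowM {n : ℕ} (R : Matrix (Fin n) (Fin n) (ZMod 2)) (j : Fin n) : WithBot (Fin n) :=
  low (column R j)

/-- A matrix over `ℤ/2` is reduced if its nonzero columns have pairwise distinct
lowest-one positions. -/
def ReducedMat {n : ℕ} (R : Matrix (Fin n) (Fin n) (ZMod 2)) : Prop :=
  ∀ j k : Fin n, j ≠ k → column R j ≠ 0 → column R k ≠ 0 → lowM R j ≠ lowM R k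

/-- A matrix is upper-triangular with all diagonal entries equal to `1`. -/
def IsUpperUnitriangular {n : ℕ} (V : Matrix (Fin n) (Fin n) (ZMod 2)) : Prop :=
  (∀ i j : Fin n, j < i → V i j = 0) ∧ ∀ i : Fin n, V i i = 1

lemma zmod2_eq_one {x : ZMod 2} (h : x ≠ 0) : x = 1 :=
  (by decide : ∀ x : ZMod 2, x ≠ 0 → x = 1) x h

lemma zmod2_add_eq_zero {a b : ZMod 2} (h : a + b = 0) : a = b :=
  (by decide : ∀ a b : ZMod 2, a + b = 0 → a = b) a b h

lemma low_mem {n : ℕ} {v : Fin n → ZMod 2} {i : Fin n} (h : low v = ↑i) : v i ≠ 0 :=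
  (Finset.mem_filter.mp (Finset.mem_of_max h)).2

lemma low_gt {n : ℕ} {v : Fin n → ZMod 2} {i : Fin n} (h : low v = ↑i)
    {m : Fin n} (hm : i < m) : v m = 0 := by
  by_contra hne
  have : (↑m : WithBot (Fin n)) ≤ low v :=
    Finset.le_max (Finset.mem_filter.mpr ⟨Finset.mem_univ _, hne⟩)
  rw [h, WithBot.coe_le_coe] at this
  exact absurd this (not_le.mpr hm)

lemma low_eq {n : ℕ} {v : Fin n → ZMod 2} {i : Fin n} (h1 : v i ≠ 0)
    (h2 : ∀ m, i < m → v m = 0) : low v = ↑i := by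
  apply le_antisymm
  · apply Finset.max_le
    intro b hb
    rw [WithBot.coe_le_coe]
    by_contra hbi
    exact (Finset.mem_filter.mp hb).2 (h2 b (not_le.mp hbi))
  · exact Finset.le_max (Finset.mem_filter.mpr ⟨Finset.mem_univ _, h1⟩)

lemma le_low {n : ℕ} {v : Fin n → ZMod 2} {m : Fin n} (h : v m ≠ 0) :
    (↑m : WithBot (Fin n)) ≤ low v :=
  Finset.le_max (Finset.mem_filter.mpr ⟨Finset.mem_univ _, h⟩)

lemma low_ne_bot {n : ℕ} {v : Fin n → ZMod 2} (h : v ≠ 0) : ∃ i : Fin n, low v = ↑i := by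
  have : ∃ m, v m ≠ 0 := by
    by_contra hc
    push_neg at hc
    exact h (funext hc)
  obtain ⟨m, hm⟩ := this
  have hne : (Finset.univ.filter (fun i => v i ≠ 0)).Nonempty :=
    ⟨m, Finset.mem_filter.mpr ⟨Finset.mem_univ _, hm⟩⟩
  obtain ⟨a, ha⟩ := Finset.max_of_nonempty hne
  exact ⟨a, ha⟩

/-- In a reduced form `R = D·V` of a boundary matrix `D` (with `D·D = 0`), the row
index of a lowest one is never itself the index of a nonzero column: if `i = low(R, j)`
for some nonzero column `j`, then column `i` of `R` is zero. -/
theorem column_of_low_is_zero {n : ℕ} (D V : Matrix (Fin n) (Fin n) (ZMod 2))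
    (hDD : D * D = 0) (hV : IsUpperUnitriangular V) (hR : ReducedMat (D * V))
    (j : Fin n) (hj : column (D * V) j ≠ 0) (i : Fin n)
    (hi : lowM (D * V) j = (i : WithBot (Fin n))) :
    column (D * V) i = 0 := by
  by_contra hi0
  have hVt : V.BlockTriangular id := fun a b h => hV.1 a b h
  have hdet : V.det = 1 := by
    rw [Matrix.det_of_upperTriangular hVt]
    simp [hV.2]
  have hu : IsUnit V.det := by rw [hdet]; exact isUnit_one
  haveI : Invertible V := V.invertibleOfIsUnitDet hu
  have hVinvT : V⁻¹.BlockTriangular id := Matrix.blockTriangular_inv_of_blockTriangular hVt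
  have hVinvdiag : ∀ k, V⁻¹ k k = 1 := by
    intro k
    have h1 := congrFun (congrFun (Matrix.nonsing_inv_mul V hu) k) k
    rw [Matrix.mul_apply, Matrix.one_apply_eq] at h1
    rw [Finset.sum_eq_single k] at h1
    · rw [hV.2 k, mul_one] at h1; exact h1
    · intro m _ hmk
      rcases lt_or_gt_of_ne hmk with h | h
      · rw [hVinvT (show (id m : Fin n) < id k from h), zero_mul]
      · rw [hV.1 m k h, mul_zero]
    · intro habs; exact absurd (Finset.mem_univ k) habs
  -- the column of V⁻¹ * (D * V) at j
  have hrgt : ∀ m, i < m → (D * V) m j = 0 := fun m hm => low_gt hi hm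
  have hWgt : ∀ k, i < k → (V⁻¹ * (D * V)) k j = 0 := by
    intro k hk
    rw [Matrix.mul_apply]
    apply Finset.sum_eq_zero
    intro m _
    rcases lt_or_ge m k with h | h
    · rw [hVinvT (show (id m : Fin n) < id k from h), zero_mul]
    · rw [hrgt m (lt_of_lt_of_le hk h), mul_zero]
  have hWi : (V⁻¹ * (D * V)) i j = 1 := by
    rw [Matrix.mul_apply, Finset.sum_eq_single i]
    · rw [hVinvdiag i, one_mul]
      exact zmod2_eq_one (low_mem (v := column (D * V) j) hi)
    · intro m _ hmi
      rcases lt_or_gt_of_ne hmi with h | h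
      · rw [hVinvT (show (id m : Fin n) < id i from h), zero_mul]
      · rw [hrgt m h, mul_zero]
    · intro habs; exact absurd (Finset.mem_univ i) habs
  -- R * (V⁻¹ * R) = 0
  have hzero : (D * V) * (V⁻¹ * (D * V)) = 0 := by
    have h1 : (D * V) * V⁻¹ = D := by
      rw [Matrix.mul_assoc, Matrix.mul_nonsing_inv V hu, Matrix.mul_one]
    rw [← Matrix.mul_assoc, h1, ← Matrix.mul_assoc, hDD, Matrix.zero_mul]
  have hsum : ∀ m, ∑ k, (D * V) m k * (V⁻¹ * (D * V)) k j = 0 := by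
    intro m
    have h0 := congrFun (congrFun hzero m) j
    rw [Matrix.mul_apply] at h0
    simpa using h0
  set T : Finset (Fin n) := Finset.univ.filter (fun k => (V⁻¹ * (D * V)) k j ≠ 0) with hT
  have hiT : i ∈ T := Finset.mem_filter.mpr ⟨Finset.mem_univ _, by rw [hWi]; exact one_ne_zero⟩
  have hsum' : ∀ m, ∑ k ∈ T, (D * V) m k = 0 := by
    intro m
    have h1 : ∑ k ∈ T, (D * V) m k * (V⁻¹ * (D * V)) k j = 0 := by
      rw [← hsum m]
      apply Finset.sum_subset T.subset_univ
      intro k _ hk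
      have : (V⁻¹ * (D * V)) k j = 0 := by
        by_contra hc
        exact hk (Finset.mem_filter.mpr ⟨Finset.mem_univ _, hc⟩)
      rw [this, mul_zero]
    rw [← h1]
    apply Finset.sum_congr rfl
    intro k hk
    rw [zmod2_eq_one (Finset.mem_filter.mp hk).2, mul_one]
  have hcoli : ∀ m, (D * V) m i = ∑ k ∈ T.erase i, (D * V) m k := by
    intro m
    have h1 := hsum' m
    rw [← Finset.insert_erase hiT, Finset.sum_insert (Finset.notMem_erase i T)] at h1
    exact zmod2_add_eq_zero h1
  set S : Finset (Fin n) := (T.erase i).filter (fun k => column (D * V) k ≠ 0) with hS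
  have hcolS : ∀ m, (D * V) m i = ∑ k ∈ S, (D * V) m k := by
    intro m
    rw [hcoli m]
    refine (Finset.sum_subset (Finset.filter_subset _ _) ?_).symm
    intro k _ hk2
    rcases em (column (D * V) k ≠ 0) with hc | hc
    · exact absurd (Finset.mem_filter.mpr ⟨‹k ∈ T.erase i›, hc⟩) hk2
    · push_neg at hc
      exact congrFun hc m
  have hSne : S.Nonempty := by
    rw [Finset.nonempty_iff_ne_empty]
    intro hS0
    apply hi0
    funext m
    have := hcolS m
    rw [hS0, Finset.sum_empty] at this
    exact this
  obtain ⟨k₀, hk₀S, hk₀max⟩ := Finset.exists_max_image S (fun k => lowM (D * V) k) hSne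
  have hk₀col : column (D * V) k₀ ≠ 0 := (Finset.mem_filter.mp hk₀S).2
  have hk₀i : k₀ ≠ i := Finset.ne_of_mem_erase (Finset.mem_filter.mp hk₀S).1
  obtain ⟨ℓ, hℓ⟩ := low_ne_bot hk₀col
  have hSlow : ∀ k ∈ S, lowM (D * V) k ≤ (↑ℓ : WithBot (Fin n)) := by
    intro k hk
    calc lowM (D * V) k ≤ lowM (D * V) k₀ := hk₀max k hk
    _ = ↑ℓ := hℓ
  have hSentry : ∀ k ∈ S, ∀ m : Fin n, ℓ < m → (D * V) m k = 0 := by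
    intro k hk m hm
    by_contra hc
    have h1 : (↑m : WithBot (Fin n)) ≤ lowM (D * V) k :=
      le_low (v := column (D * V) k) hc
    have h2 := le_trans h1 (hSlow k hk)
    rw [WithBot.coe_le_coe] at h2
    exact absurd h2 (not_le.mpr hm)
  have hgt : ∀ m : Fin n, ℓ < m → (D * V) m i = 0 := by
    intro m hm
    rw [hcolS m]
    exact Finset.sum_eq_zero (fun k hk => hSentry k hk m hm)
  have hℓentry : (D * V) ℓ i ≠ 0 := by
    rw [hcolS ℓ, ← Finset.insert_erase hk₀S,
      Finset.sum_insert (Finset.notMem_erase k₀ S)]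
    have hrest : ∑ k ∈ S.erase k₀, (D * V) ℓ k = 0 := by
      apply Finset.sum_eq_zero
      intro k hk
      have hkS : k ∈ S := Finset.mem_of_mem_erase hk
      have hkk₀ : k ≠ k₀ := Finset.ne_of_mem_erase hk
      have hkcol : column (D * V) k ≠ 0 := (Finset.mem_filter.mp hkS).2
      have hne : lowM (D * V) k ≠ lowM (D * V) k₀ := hR k k₀ hkk₀ hkcol hk₀col
      have hlt : lowM (D * V) k < (↑ℓ : WithBot (Fin n)) :=
        lt_of_le_of_ne (hSlow k hkS) (by rw [← hℓ] at *; exact hne)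
      by_contra hc
      have h1 : (↑ℓ : WithBot (Fin n)) ≤ lowM (D * V) k :=
        le_low (v := column (D * V) k) hc
      exact absurd h1 (not_le.mpr hlt)
    rw [hrest, add_zero]
    exact low_mem (v := column (D * V) k₀) hℓ
  have hlowi : lowM (D * V) i = ↑ℓ := low_eq hℓentry hgt
  exact hR k₀ i hk₀i hk₀col hi0 (hℓ.trans hlowi.symm)
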